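/- Let f = h + ḡ ∈ S_H^δ[α, β] with δ ≥ 0. Then for all z with |z| = r < 1, |g(z)| ≤ E/(2^δ(2-α)β³), where E = rβ(2^δ(2-α)β - (1-α)(2-(r+2β)β)) + (2-2α-2^δ(2-α)β)(1-β²)log(1+rβ), assuming β ∈ (0,1). -/

import Mathlib

open Complex Metric

set_option maxHeartbeats 1000000

lemma normsq_split (x : ℂ) : ‖x‖^2 = x.re^2 + x.im^2 := by
  rw [Complex.sq_norm, Complex.normSq_apply]; ring

lemma sp_real (t b s : ℝ) (ht : 0 ≤ t) (ht1 : t < 1) (hb : 0 ≤ b) (hb1 : b < 1)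
    (hs : 0 ≤ s) (hs1 : s < 1)
    (key : t^2 + b^2 - s^2 - s^2*b^2*t^2 ≤ 2*b*t*(1-s^2)) : t*(1+b*s) ≤ b+s := by
  by_contra hcon
  push_neg at hcon
  have hprod : ((1+b*s)*t-(b+s)) * ((1-b*s)*t-(b-s)) ≤ 0 := by nlinarith [key]
  have h2 : (1-b*s)*t - (b-s) ≤ 0 := by
    by_contra h3
    push_neg at h3
    nlinarith
  nlinarith [mul_nonneg hb hs, mul_nonneg (mul_nonneg hb hs) hs]

lemma schwarz_pick (w : ℂ → ℂ) (hw : DifferentiableOn ℂ w (ball 0 1))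
    (hwlt : ∀ z ∈ ball (0:ℂ) 1, ‖w z‖ < 1) (z : ℂ) (hz : z ∈ ball (0:ℂ) 1) :
    ‖w z‖ * (1 + ‖w 0‖ * ‖z‖) ≤ ‖w 0‖ + ‖z‖ := by
  have h0 : (0:ℂ) ∈ ball (0:ℂ) 1 := by simp
  set v : ℂ := w 0 with hv
  have hvlt : ‖v‖ < 1 := hwlt 0 h0
  have hden : ∀ ζ ∈ ball (0:ℂ) 1, (1 - (starRingEnd ℂ) v * w ζ) ≠ 0 := by
    intro ζ hζ
    have : ‖(starRingEnd ℂ) v * w ζ‖ < 1 := by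
      rw [norm_mul, RCLike.norm_conj]
      calc ‖v‖ * ‖w ζ‖ ≤ 1 * ‖w ζ‖ :=
            mul_le_mul_of_nonneg_right hvlt.le (norm_nonneg _)
        _ < 1 := by simpa using hwlt ζ hζ
    intro hEq
    rw [sub_eq_zero] at hEq
    rw [← hEq] at this
    simp at this
  set φ : ℂ → ℂ := fun ζ => (w ζ - v) / (1 - (starRingEnd ℂ) v * w ζ) with hφ
  have hφd : DifferentiableOn ℂ φ (ball 0 1) :=
    DifferentiableOn.div (hw.sub_const v)
      ((differentiableOn_const _).sub ((differentiableOn_const _).mul hw)) hden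
  have hφ0 : φ 0 = 0 := by simp [hφ, hv]
  have hmaps : Set.MapsTo φ (ball (0:ℂ) 1) (ball (0:ℂ) 1) := by
    intro ζ hζ
    rw [mem_ball_zero_iff]
    have hu : ‖w ζ‖ < 1 := hwlt ζ hζ
    have hdenpos : 0 < ‖1 - (starRingEnd ℂ) v * w ζ‖ := norm_pos_iff.mpr (hden ζ hζ)
    rw [hφ]
    simp only
    rw [norm_div, div_lt_one hdenpos]
    have hsq : ‖w ζ - v‖^2 < ‖1 - (starRingEnd ℂ) v * w ζ‖^2 := by
      have e1 := normsq_split (w ζ - v)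
      have e2 := normsq_split (1 - (starRingEnd ℂ) v * w ζ)
      have e3 := normsq_split (w ζ)
      have e4 := normsq_split v
      simp only [Complex.sub_re, Complex.sub_im, Complex.mul_re, Complex.mul_im,
        Complex.conj_re, Complex.conj_im, Complex.one_re, Complex.one_im] at e1 e2
      have hu2 : (w ζ).re^2 + (w ζ).im^2 < 1 := by
        rw [← e3]; nlinarith [norm_nonneg (w ζ)]
      have hv2 : v.re^2 + v.im^2 < 1 := by
        rw [← e4]; nlinarith [norm_nonneg v]
      rw [e1, e2]
      nlinarith [mul_pos (sub_pos.mpr hu2) (sub_pos.mpr hv2)]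
    nlinarith [norm_nonneg (w ζ - v), hdenpos]
  have hsch : ‖φ z‖ ≤ ‖z‖ := by
    have := Complex.norm_le_norm_of_mapsTo_ball hφd (hmaps.mono_right ball_subset_closedBall) hφ0
      (show ‖z‖ < 1 by simpa using hz)
    simpa using this
  have hdenz := hden z hz
  have hkey : ‖w z - v‖ ≤ ‖z‖ * ‖1 - (starRingEnd ℂ) v * w z‖ := by
    rw [hφ] at hsch
    simp only [norm_div] at hsch
    rw [div_le_iff₀ (norm_pos_iff.mpr hdenz)] at hsch
    linarith [hsch]
  have hu : ‖w z‖ < 1 := hwlt z hz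
  have hzlt : ‖z‖ < 1 := by simpa using hz
  apply sp_real _ _ _ (norm_nonneg _) hu (norm_nonneg v) hvlt (norm_nonneg z) hzlt
  have hsq : ‖w z - v‖^2 ≤ ‖z‖^2 * ‖1 - (starRingEnd ℂ) v * w z‖^2 := by
    rw [← mul_pow]
    exact pow_le_pow_left₀ (norm_nonneg _) hkey 2
  have e1 := normsq_split (w z - v)
  have e2 := normsq_split (1 - (starRingEnd ℂ) v * w z)
  have e3 := normsq_split (w z)
  have e4 := normsq_split v
  simp only [Complex.sub_re, Complex.sub_im, Complex.mul_re, Complex.mul_im,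
    Complex.conj_re, Complex.conj_im, Complex.one_re, Complex.one_im] at e1 e2
  rw [e1, e2] at hsq
  have e34 : ‖v‖^2 * ‖w z‖^2 = (v.re^2 + v.im^2) * ((w z).re^2 + (w z).im^2) := by
    rw [e3, e4]
  have e34s : ‖z‖^2 * (‖v‖^2 * ‖w z‖^2)
      = ‖z‖^2 * ((v.re^2 + v.im^2) * ((w z).re^2 + (w z).im^2)) := by rw [e34]
  have hmsq : (v.re*(w z).re + v.im*(w z).im)^2 ≤ ‖v‖^2 * ‖w z‖^2 := by
    rw [e34]; nlinarith [sq_nonneg (v.re*(w z).im - v.im*(w z).re)]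
  have hm : v.re*(w z).re + v.im*(w z).im ≤ ‖v‖ * ‖w z‖ := by
    nlinarith [hmsq, mul_nonneg (norm_nonneg v) (norm_nonneg (w z)),
      sq_nonneg (v.re*(w z).re + v.im*(w z).im + ‖v‖*‖w z‖)]
  have hs2 : (0:ℝ) ≤ 1 - ‖z‖^2 := by nlinarith [norm_nonneg z]
  have key2 : 2*(v.re*(w z).re + v.im*(w z).im)*(1-‖z‖^2) ≤ 2*‖v‖*‖w z‖*(1-‖z‖^2) := by
    nlinarith [mul_le_mul_of_nonneg_right hm hs2]
  nlinarith [hsq, key2, e3, e4, e34s]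

lemma deriv_h_bound (α δ : ℝ) (hα0 : 0 ≤ α) (hα1 : α < 1) (hδ : 0 ≤ δ)
    (h : ℂ → ℂ) (a : ℕ → ℂ)
    (ha0 : a 0 = 0) (ha1 : a 1 = 1)
    (hreph : ∀ z ∈ ball (0 : ℂ) 1, HasSum (fun n : ℕ => a n * z ^ n) (h z))
    (hsb : Summable fun n : ℕ =>
      ((n : ℝ) + 2) ^ δ * (((n : ℝ) + 2 - α) / (1 - α)) * ‖a (n + 2)‖)
    (hcoef : ∑' n : ℕ,
      ((n : ℝ) + 2) ^ δ * (((n : ℝ) + 2 - α) / (1 - α)) * ‖a (n + 2)‖ ≤ 1) :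
    ∀ z ∈ ball (0 : ℂ) 1,
      ‖deriv h z‖ ≤ 1 + (2*(1-α)/((2:ℝ)^δ*(2-α))) * ‖z‖ := by
  have h2d : (0:ℝ) < (2:ℝ)^δ := Real.rpow_pos_of_pos (by norm_num) δ
  have h2a : (0:ℝ) < 2 - α := by linarith
  have h1a : (0:ℝ) < 1 - α := by linarith
  have hApos : (0:ℝ) < (2:ℝ)^δ * (2-α) := mul_pos h2d h2a
  set K : ℝ := 2*(1-α)/((2:ℝ)^δ*(2-α)) with hK
  have hKpos : 0 < K := div_pos (by linarith) hApos
  -- coefficient comparison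
  have hKw : ∀ n : ℕ, ((n:ℝ)+2) * ‖a (n+2)‖ ≤
      K * (((n : ℝ) + 2) ^ δ * (((n : ℝ) + 2 - α) / (1 - α)) * ‖a (n + 2)‖) := by
    intro n
    set m : ℝ := (n:ℝ) + 2 with hm
    have hm2 : (2:ℝ) ≤ m := by rw [hm]; have := Nat.cast_nonneg (α := ℝ) n; linarith
    have hrp : (2:ℝ)^δ ≤ m^δ := Real.rpow_le_rpow (by norm_num) hm2 hδ
    have hmono : m * (2 - α) ≤ 2 * (m - α) := by nlinarith
    have h1 : m * ((2:ℝ)^δ * (2-α)) ≤ 2 * (m^δ * (m - α)) := by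
      calc m * ((2:ℝ)^δ * (2-α)) = (2:ℝ)^δ * (m * (2-α)) := by ring
        _ ≤ (2:ℝ)^δ * (2 * (m - α)) := by
            apply mul_le_mul_of_nonneg_left hmono h2d.le
        _ ≤ m^δ * (2 * (m - α)) := by
            apply mul_le_mul_of_nonneg_right hrp; nlinarith
        _ = 2 * (m^δ * (m - α)) := by ring
    have hmain : m ≤ K * (m ^ δ * ((m - α) / (1 - α))) := by
      have heq : K * (m ^ δ * ((m - α) / (1 - α))) = 2 * (m^δ * (m-α)) / ((2:ℝ)^δ*(2-α)) := by
        rw [hK]; field_simp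
      rw [heq, le_div_iff₀ hApos]
      linarith
    calc m * ‖a (n+2)‖ ≤ (K * (m ^ δ * ((m - α) / (1 - α)))) * ‖a (n+2)‖ :=
          mul_le_mul_of_nonneg_right hmain (norm_nonneg _)
      _ = K * (m ^ δ * ((m - α) / (1 - α)) * ‖a (n+2)‖) := by ring
  -- summability of n * ‖a n‖
  have husum2 : Summable (fun n : ℕ => ((n+2:ℕ):ℝ) * ‖a (n+2)‖) := by
    apply Summable.of_nonneg_of_le (fun n => by positivity) (fun n => ?_) (hsb.mul_left K)
    push_cast
    exact hKw n
  have husum : Summable (fun n : ℕ => (n:ℝ) * ‖a n‖) :=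
    (summable_nat_add_iff 2).mp husum2
  intro z hz
  have hz1 : ‖z‖ < 1 := by simpa using hz
  -- term derivatives
  have hgd : ∀ (n : ℕ) (y : ℂ), y ∈ ball (0:ℂ) 1 →
      HasDerivAt (fun y : ℂ => a n * y ^ n) (a n * ((n:ℂ) * y^(n-1))) y :=
    fun n y _ => (hasDerivAt_pow n y).const_mul (a n)
  have hbnd : ∀ (n : ℕ) (y : ℂ), y ∈ ball (0:ℂ) 1 →
      ‖a n * ((n:ℂ) * y^(n-1))‖ ≤ (n:ℝ) * ‖a n‖ := by
    intro n y hy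
    have hy1 : ‖y‖ < 1 := by simpa using hy
    rw [norm_mul, norm_mul, norm_pow, Complex.norm_natCast]
    calc ‖a n‖ * ((n:ℝ) * ‖y‖^(n-1)) ≤ ‖a n‖ * ((n:ℝ) * 1) := by
          apply mul_le_mul_of_nonneg_left _ (norm_nonneg _)
          apply mul_le_mul_of_nonneg_left _ (Nat.cast_nonneg n)
          exact pow_le_one₀ (norm_nonneg y) hy1.le
      _ = (n:ℝ) * ‖a n‖ := by ring
  have hsum0 : Summable (fun n : ℕ => a n * (0:ℂ)^n) := by
    have : (fun n : ℕ => a n * (0:ℂ)^n) = fun _ => (0:ℂ) := by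
      funext n
      cases n with
      | zero => simp [ha0]
      | succ k => simp [zero_pow]
    rw [this]; exact summable_zero
  have hH := hasDerivAt_tsum_of_isPreconnected husum isOpen_ball
    (convex_ball (0:ℂ) 1).isPreconnected hgd hbnd (by simp : (0:ℂ) ∈ ball (0:ℂ) 1)
    hsum0 hz
  have hderiv_eq : deriv h z = ∑' n : ℕ, a n * ((n:ℂ) * z^(n-1)) := by
    have heq : h =ᶠ[nhds z] (fun y => ∑' n : ℕ, a n * y ^ n) := by
      filter_upwards [isOpen_ball.mem_nhds hz] with y hy
      exact ((hreph y hy).tsum_eq).symm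
    rw [heq.deriv_eq]
    exact hH.deriv
  rw [hderiv_eq]
  -- summability of norms
  have hNsum : Summable (fun n : ℕ => ‖a n * ((n:ℂ) * z^(n-1))‖) :=
    Summable.of_nonneg_of_le (fun n => norm_nonneg _) (fun n => hbnd n z hz) husum
  calc ‖∑' n : ℕ, a n * ((n:ℂ) * z^(n-1))‖ ≤ ∑' n : ℕ, ‖a n * ((n:ℂ) * z^(n-1))‖ :=
        norm_tsum_le_tsum_norm hNsum
    _ ≤ 1 + K * ‖z‖ := by
        rw [Summable.tsum_eq_zero_add hNsum, Summable.tsum_eq_zero_add ((summable_nat_add_iff 1).mpr hNsum)]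
        have e0 : ‖a 0 * (((0:ℕ):ℂ) * z ^ (0 - 1))‖ = 0 := by simp [ha0]
        have e1 : ‖a (0+1) * (((0+1:ℕ):ℂ) * z ^ (0+1-1))‖ = 1 := by
          norm_num [ha1]
        rw [e0, e1]
        have hterm : ∀ b : ℕ, ‖a (b+2) * ((((b+2:ℕ)):ℂ) * z^(b+1))‖ ≤
            (K * (((b:ℝ)+2)^δ * (((b:ℝ)+2-α)/(1-α)) * ‖a (b+2)‖)) * ‖z‖ := by
          intro b
          rw [norm_mul, norm_mul, norm_pow, Complex.norm_natCast]
          have h1 : ‖z‖^(b+1) ≤ ‖z‖ := by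
            calc ‖z‖^(b+1) ≤ ‖z‖^1 :=
                  pow_le_pow_of_le_one (norm_nonneg z) hz1.le (by omega)
              _ = ‖z‖ := pow_one _
          have h2 : ((b+2:ℕ):ℝ) * ‖a (b+2)‖ ≤
              K * (((b:ℝ)+2)^δ * (((b:ℝ)+2-α)/(1-α)) * ‖a (b+2)‖) := by
            push_cast
            exact hKw b
          calc ‖a (b+2)‖ * (((b+2:ℕ):ℝ) * ‖z‖^(b+1))
              ≤ ‖a (b+2)‖ * (((b+2:ℕ):ℝ) * ‖z‖) :=
                mul_le_mul_of_nonneg_left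
                  (mul_le_mul_of_nonneg_left h1 (Nat.cast_nonneg _)) (norm_nonneg _)
            _ = (((b+2:ℕ):ℝ) * ‖a (b+2)‖) * ‖z‖ := by ring
            _ ≤ _ := mul_le_mul_of_nonneg_right h2 (norm_nonneg z)
        have htail : ∑' (b : ℕ), ‖a (b+1+1) * (((b+1+1:ℕ):ℂ) * z ^ (b+1+1-1))‖ ≤ K * ‖z‖ := by
          have hsumR : Summable (fun b : ℕ =>
              (K * (((b:ℝ)+2)^δ * (((b:ℝ)+2-α)/(1-α)) * ‖a (b+2)‖)) * ‖z‖) :=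
            (hsb.mul_left K).mul_right ‖z‖
          have hsumL : Summable (fun b : ℕ =>
              ‖a (b+1+1) * (((b+1+1:ℕ):ℂ) * z ^ (b+1+1-1))‖) :=
            (summable_nat_add_iff 1).mpr ((summable_nat_add_iff 1).mpr hNsum)
          calc ∑' (b : ℕ), ‖a (b+1+1) * (((b+1+1:ℕ):ℂ) * z ^ (b+1+1-1))‖
              ≤ ∑' (b : ℕ), (K * (((b:ℝ)+2)^δ * (((b:ℝ)+2-α)/(1-α)) * ‖a (b+2)‖)) * ‖z‖ :=
                Summable.tsum_le_tsum (fun b => hterm b) hsumL hsumR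
            _ = K * (∑' (b : ℕ), ((b:ℝ)+2)^δ * (((b:ℝ)+2-α)/(1-α)) * ‖a (b+2)‖) * ‖z‖ := by
                rw [tsum_mul_right, tsum_mul_left]
            _ ≤ K * 1 * ‖z‖ := by
                apply mul_le_mul_of_nonneg_right _ (norm_nonneg z)
                exact mul_le_mul_of_nonneg_left hcoef hKpos.le
            _ = K * ‖z‖ := by ring
        linarith [htail]

theorem g_growth_upper
    (α β δ : ℝ) (hα0 : 0 ≤ α) (hα1 : α < 1) (hβ0 : 0 < β) (hβ1 : β < 1)
    (hδ : 0 ≤ δ)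
    (h g w : ℂ → ℂ) (a : ℕ → ℂ)
    (ha0 : a 0 = 0) (ha1 : a 1 = 1)
    (hreph : ∀ z ∈ ball (0 : ℂ) 1, HasSum (fun n : ℕ => a n * z ^ n) (h z))
    (hsb : Summable fun n : ℕ =>
      ((n : ℝ) + 2) ^ δ * (((n : ℝ) + 2 - α) / (1 - α)) * ‖a (n + 2)‖)
    (hcoef : ∑' n : ℕ,
      ((n : ℝ) + 2) ^ δ * (((n : ℝ) + 2 - α) / (1 - α)) * ‖a (n + 2)‖ ≤ 1)
    (hg : DifferentiableOn ℂ g (ball (0 : ℂ) 1)) (hg0 : g 0 = 0)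
    (hw : DifferentiableOn ℂ w (ball (0 : ℂ) 1))
    (hwlt : ∀ z ∈ ball (0 : ℂ) 1, ‖w z‖ < 1)
    (hw0 : ‖w 0‖ = β)
    (hdil : ∀ z ∈ ball (0 : ℂ) 1, deriv g z = w z * deriv h z) :
    ∀ z ∈ ball (0 : ℂ) 1,
      ‖g z‖ ≤
        (‖z‖ * β * ((2 : ℝ) ^ δ * (2 - α) * β -
            (1 - α) * (2 - (‖z‖ + 2 * β) * β)) +
          (2 - 2 * α - (2 : ℝ) ^ δ * (2 - α) * β) * (1 - β ^ 2) *
            Real.log (1 + ‖z‖ * β)) /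
        ((2 : ℝ) ^ δ * (2 - α) * β ^ 3) := by
  intro z hz
  have h2d : (0:ℝ) < (2:ℝ)^δ := Real.rpow_pos_of_pos (by norm_num) δ
  have h2a : (0:ℝ) < 2 - α := by linarith
  have h1a : (0:ℝ) < 1 - α := by linarith
  have hApos : (0:ℝ) < (2:ℝ)^δ * (2-α) := mul_pos h2d h2a
  set A : ℝ := (2:ℝ)^δ * (2-α) with hA
  set K : ℝ := 2*(1-α)/A with hKdef
  have hKpos : 0 < K := div_pos (by linarith) hApos
  set r : ℝ := ‖z‖ with hr
  have hr0 : 0 ≤ r := norm_nonneg z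
  have hr1 : r < 1 := by simpa [hr] using hz
  set G : ℝ → ℝ := fun s =>
    (s * β * (A * β - (1 - α) * (2 - (s + 2 * β) * β)) +
      (2 - 2 * α - A * β) * (1 - β ^ 2) * Real.log (1 + s * β)) / (A * β ^ 3) with hG
  set F : ℝ → ℝ := fun s => (β + s) * (1 + K * s) / (1 + β * s) with hF
  -- antiderivative property
  have hGd : ∀ s : ℝ, 0 ≤ s → HasDerivAt G (F s) s := by
    intro s hs
    have hden : (0:ℝ) < 1 + s * β := by nlinarith
    have hlog : HasDerivAt (fun s : ℝ => Real.log (1 + s * β)) (β / (1 + s * β)) s := by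
      have h1 : HasDerivAt (fun s : ℝ => 1 + s * β) β s := by
        simpa using ((hasDerivAt_id s).mul_const β).const_add 1
      have := (Real.hasDerivAt_log hden.ne').comp s h1
      simpa [div_eq_inv_mul, Function.comp_def] using this
    have d1 : HasDerivAt (fun s : ℝ => s * β) β s := by
      simpa using (hasDerivAt_id s).mul_const β
    have d2 : HasDerivAt (fun s : ℝ => A * β - (1 - α) * (2 - (s + 2 * β) * β))
        ((1 - α) * β) s := by
      have i1 : HasDerivAt (fun s : ℝ => (s + 2 * β) * β) β s := by
        simpa using ((hasDerivAt_id s).add_const (2 * β)).mul_const β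
      have i2 : HasDerivAt (fun s : ℝ => 2 - (s + 2 * β) * β) (-β) s := i1.const_sub 2
      have i3 := (i2.const_mul (1 - α)).const_sub (A * β)
      simpa using i3
    have dnum : HasDerivAt (fun s : ℝ =>
        s * β * (A * β - (1 - α) * (2 - (s + 2 * β) * β)) +
          (2 - 2 * α - A * β) * (1 - β ^ 2) * Real.log (1 + s * β))
        (β * (A * β - (1 - α) * (2 - (s + 2 * β) * β)) + s * β * ((1 - α) * β) +
          (2 - 2 * α - A * β) * (1 - β ^ 2) * (β / (1 + s * β))) s :=
      (d1.mul d2).add (hlog.const_mul ((2 - 2 * α - A * β) * (1 - β ^ 2)))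
    have dG := dnum.div_const (A * β ^ 3)
    have heq : (β * (A * β - (1 - α) * (2 - (s + 2 * β) * β)) + s * β * ((1 - α) * β) +
          (2 - 2 * α - A * β) * (1 - β ^ 2) * (β / (1 + s * β))) / (A * β ^ 3) = F s := by
      rw [hF, hKdef]
      field_simp
      ring
    rw [hG]
    rw [← heq]
    exact dG
  -- derivative of t ↦ g(tz)
  have hmem : ∀ t : ℝ, t ∈ Set.uIcc (0:ℝ) 1 → ((t:ℂ) * z) ∈ ball (0:ℂ) 1 := by
    intro t ht
    rw [Set.uIcc_of_le (by norm_num : (0:ℝ) ≤ 1)] at ht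
    rw [mem_ball_zero_iff, norm_mul, Complex.norm_real, Real.norm_eq_abs,
      _root_.abs_of_nonneg ht.1]
    calc t * ‖z‖ ≤ 1 * ‖z‖ := mul_le_mul_of_nonneg_right ht.2 hr0
      _ < 1 := by simpa using hr1
  have hgderiv : ∀ t : ℝ, t ∈ Set.uIcc (0:ℝ) 1 →
      HasDerivAt (fun t : ℝ => g ((t:ℂ) * z)) (deriv g ((t:ℂ) * z) * z) t := by
    intro t ht
    have hy := hmem t ht
    have hga : HasDerivAt g (deriv g ((t:ℂ) * z)) ((t:ℂ) * z) :=
      (hg.differentiableAt (isOpen_ball.mem_nhds hy)).hasDerivAt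
    have hin : HasDerivAt (fun ζ : ℂ => ζ * z) z (t:ℂ) := by
      simpa using (hasDerivAt_id (t:ℂ)).mul_const z
    have := (hga.comp (t:ℂ) hin).comp_ofReal
    simpa using this
  -- continuity of deriv g on the ball
  have hderiv_cont : ContinuousOn (deriv g) (ball (0:ℂ) 1) :=
    ((hg.analyticOnNhd isOpen_ball).deriv).continuousOn
  have hcont_int : IntervalIntegrable (fun t : ℝ => deriv g ((t:ℂ) * z) * z)
      MeasureTheory.volume 0 1 := by
    apply ContinuousOn.intervalIntegrable
    apply ContinuousOn.mul _ continuousOn_const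
    apply hderiv_cont.comp
    · exact (Continuous.continuousOn (by continuity))
    · intro t ht
      exact hmem t ht
  have hFTC : ∫ t in (0:ℝ)..1, deriv g ((t:ℂ) * z) * z = g z - g 0 := by
    have := intervalIntegral.integral_eq_sub_of_hasDerivAt hgderiv hcont_int
    simpa using this
  -- the bound function and its integral
  have hΦd : ∀ t : ℝ, t ∈ Set.uIcc (0:ℝ) 1 →
      HasDerivAt (fun t : ℝ => G (t * r)) (F (t * r) * r) t := by
    intro t ht
    rw [Set.uIcc_of_le (by norm_num : (0:ℝ) ≤ 1)] at ht
    have hts : 0 ≤ t * r := mul_nonneg ht.1 hr0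
    have := (hGd (t * r) hts).comp t ((hasDerivAt_id t).mul_const r)
    simpa [Function.comp_def] using this
  have hFcont : IntervalIntegrable (fun t : ℝ => F (t * r) * r)
      MeasureTheory.volume 0 1 := by
    apply ContinuousOn.intervalIntegrable
    apply ContinuousOn.mul _ continuousOn_const
    rw [hF]
    apply ContinuousOn.div
    · fun_prop
    · fun_prop
    · intro t ht
      rw [Set.uIcc_of_le (by norm_num : (0:ℝ) ≤ 1)] at ht
      have : 0 ≤ t * r := mul_nonneg ht.1 hr0
      nlinarith [hβ0]
  have hΦFTC : ∫ t in (0:ℝ)..1, F (t * r) * r = G r - G 0 := by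
    have := intervalIntegral.integral_eq_sub_of_hasDerivAt hΦd hFcont
    simpa using this
  have hG0 : G 0 = 0 := by simp [hG]
  -- pointwise bound
  have hptwise : ∀ t ∈ Set.uIoc (0:ℝ) 1, ‖deriv g ((t:ℂ) * z) * z‖ ≤ F (t * r) * r := by
    intro t ht
    rw [Set.uIoc_of_le (by norm_num : (0:ℝ) ≤ 1)] at ht
    have ht' : t ∈ Set.uIcc (0:ℝ) 1 := by
      rw [Set.uIcc_of_le (by norm_num : (0:ℝ) ≤ 1)]
      exact ⟨ht.1.le, ht.2⟩
    have hy := hmem t ht'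
    set y : ℂ := (t:ℂ) * z with hyd
    have hny : ‖y‖ = t * r := by
      rw [hyd, norm_mul, Complex.norm_real, Real.norm_eq_abs, _root_.abs_of_nonneg ht.1.le]
    have hny1 : ‖y‖ < 1 := by simpa using hy
    have hdeng : (0:ℝ) < 1 + β * (t * r) := by nlinarith [mul_nonneg ht.1.le hr0]
    -- Schwarz-Pick bound on w
    have hSP := schwarz_pick w hw hwlt y hy
    rw [hw0, hny] at hSP
    have hwb : ‖w y‖ ≤ (β + t * r) / (1 + β * (t * r)) := by
      rw [le_div_iff₀ hdeng]
      calc ‖w y‖ * (1 + β * (t * r)) = ‖w y‖ * (1 + β * (t * r)) := rfl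
        _ ≤ β + t * r := by linarith [hSP]
    -- bound on deriv h
    have hhb := deriv_h_bound α δ hα0 hα1 hδ h a ha0 ha1 hreph hsb hcoef y hy
    rw [hny] at hhb
    have hhb' : ‖deriv h y‖ ≤ 1 + K * (t * r) := by
      rw [hKdef]
      convert hhb using 3
    -- combine
    rw [norm_mul, hdil y hy, norm_mul]
    have hb1 : (0:ℝ) ≤ (β + t * r) / (1 + β * (t * r)) := by
      apply div_nonneg _ hdeng.le
      nlinarith [mul_nonneg ht.1.le hr0]
    have hb2 : (0:ℝ) ≤ 1 + K * (t * r) := by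
      nlinarith [mul_nonneg ht.1.le hr0, hKpos]
    calc ‖w y‖ * ‖deriv h y‖ * ‖z‖
        ≤ ((β + t * r) / (1 + β * (t * r))) * (1 + K * (t * r)) * r := by
          apply mul_le_mul _ le_rfl hr0
          · exact mul_nonneg hb1 hb2
          · exact mul_le_mul hwb hhb' (norm_nonneg _) hb1
      _ = F (t * r) * r := by
          rw [hF]
          rw [div_mul_eq_mul_div]
  -- put everything together
  have hnorm : ‖g z‖ ≤ G r := by
    have h1 : ‖g z‖ = ‖∫ t in (0:ℝ)..1, deriv g ((t:ℂ) * z) * z‖ := by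
      rw [hFTC, hg0, sub_zero]
    rw [h1]
    calc ‖∫ t in (0:ℝ)..1, deriv g ((t:ℂ) * z) * z‖
        ≤ |∫ t in (0:ℝ)..1, F (t * r) * r| := by
          apply intervalIntegral.norm_integral_le_abs_of_norm_le _ hFcont
          filter_upwards [MeasureTheory.ae_restrict_mem measurableSet_uIoc] with t ht
          exact hptwise t ht
      _ = ∫ t in (0:ℝ)..1, F (t * r) * r := by
          apply _root_.abs_of_nonneg
          apply intervalIntegral.integral_nonneg (by norm_num)
          intro t ht
          have hFt : 0 ≤ F (t * r) := by
            rw [hF]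
            have h1 : 0 ≤ t * r := mul_nonneg ht.1 hr0
            have : (0:ℝ) < 1 + β * (t * r) := by nlinarith
            apply div_nonneg _ this.le
            have h2 : 0 ≤ K * (t * r) := mul_nonneg hKpos.le h1
            nlinarith
          exact mul_nonneg hFt hr0
      _ = G r - G 0 := hΦFTC
      _ = G r := by rw [hG0, sub_zero]
  calc ‖g z‖ ≤ G r := hnorm
    _ = _ := by rw [hG]
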